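/- Let ρ > 0, ψ₀ > 0, A > 0, A_θ > 0, q > 0, and let ψ₁, φ, ψ₂, ψθ₂, u, ω, L, a, b, c, f and the remaining free entries be real numbers. Let M_s and M_θ be the 3×3 matrices with rows, respectively, ( −(Aa/ψ₀)u , 1/ψ₀ , 0 ), ( q − (ψ₁ + 2ψ₁Aa/ψ₀ − Ab)u² , 2(ψ₁/ψ₀)u , 0 ), ( m₃₁ , (φ/ψ₀)L , φu ), and ( −(Ac/A_θ)ω , 0 , 1/A_θ ), ( m₂₁ , (ψ₂/ψ₀)ω , m₂₃ ), ( q − (ψθ₂(A_θ+Ac) − A·A_θ·f)ω² , 0 , 2ψθ₂ω ). Set Υ₁ = (1/ψ₀²)(ψ₁ − Aa/2)² + (1/ψ₀)(Ab − ψ₁) and Υ₂ = (1/A_θ²)(ψθ₂A_θ − Ac/2)² + (1/A_θ)(A(fA_θ + ψθ₂c) − ψθ₂A_θ), and assume Υ₁ ≥ 0 and Υ₂ ≥ 0. Then all eigenvalues of M_s and of M_θ are real, with λ₊ˢ ≠ λ₋ˢ and λ₊^θ ≠ λ₋^θ, where λ±ˢ = ((2ψ₁ − Aa)/(2ψ₀))u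 ± √(q/ψ₀ + Υ₁u²) and λ±^θ = ((2ψθ₂A_θ − Ac)/(2A_θ))ω ± √(q/A_θ + Υ₂ω²). If moreover φu ∉ {λ₊ˢ, λ₋ˢ}, then M_s has three distinct real eigenvalues and ℝ³ admits a basis of eigenvectors of M_s; and if (ψ₂/ψ₀)ω ∉ {λ₊^θ, λ₋^θ}, then the same conclusion holds for M_θ. -/
import Mathlib


open Matrix

/-- The coefficient matrix `M_s` (axial direction) of the quasilinear form of the
2D blood-flow model, with the state abstracted into real parameters. -/
noncomputable def Ms (ψ₀ ψ₁ φ A u L a b q m₃₁ : ℝ) : Matrix (Fin 3) (Fin 3) ℝ :=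
  !![-(A * a / ψ₀) * u, 1 / ψ₀, 0;
     q - (ψ₁ + 2 * ψ₁ * A * a / ψ₀ - A * b) * u ^ 2, 2 * (ψ₁ / ψ₀) * u, 0;
     m₃₁, (φ / ψ₀) * L, φ * u]

/-- The coefficient matrix `M_θ` (angular direction) of the quasilinear form of the
2D blood-flow model, with the state abstracted into real parameters. -/
noncomputable def Mθ (ψ₀ Aθ ψ₂ ψθ₂ A ω c f q m₂₁ m₂₃ : ℝ) : Matrix (Fin 3) (Fin 3) ℝ :=
  !![-(A * c / Aθ) * ω, 0, 1 / Aθ;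
     m₂₁, (ψ₂ / ψ₀) * ω, m₂₃;
     q - (ψθ₂ * (Aθ + A * c) - A * Aθ * f) * ω ^ 2, 0, 2 * ψθ₂ * ω]

lemma spec3 {K : Type*} [Field K] (M : Matrix (Fin 3) (Fin 3) K) (r₁ r₂ r₃ : K)
    (h : ∀ x : K, (x • (1 : Matrix (Fin 3) (Fin 3) K) - M).det = (x - r₁) * (x - r₂) * (x - r₃)) :
    spectrum K M = {r₁, r₂, r₃} := by
  ext x
  rw [spectrum.mem_iff, Matrix.isUnit_iff_isUnit_det, isUnit_iff_ne_zero, not_ne_iff,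
    Algebra.algebraMap_eq_smul_one, h x]
  simp [mul_eq_zero, sub_eq_zero, or_assoc]

lemma basis3 (M : Matrix (Fin 3) (Fin 3) ℝ) (r₁ r₂ r₃ : ℝ)
    (hspec : spectrum ℝ M = {r₁, r₂, r₃}) (h12 : r₁ ≠ r₂) (h13 : r₁ ≠ r₃) (h23 : r₂ ≠ r₃) :
    (spectrum ℝ M).ncard = 3 ∧ ∃ v : Fin 3 → (Fin 3 → ℝ), LinearIndependent ℝ v ∧
      ∀ i, ∃ μ : ℝ, M.mulVec (v i) = μ • v i := by
  refine ⟨by rw [hspec]; exact Set.ncard_eq_three.mpr ⟨r₁, r₂, r₃, h12, h13, h23, rfl⟩, ?_⟩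
  set f : Module.End ℝ (Fin 3 → ℝ) := Matrix.toLinAlgEquiv' M with hf
  have hs : spectrum ℝ f = spectrum ℝ M := AlgEquiv.spectrum_eq Matrix.toLinAlgEquiv' M
  set μs : Fin 3 → ℝ := ![r₁, r₂, r₃] with hμs
  have hinj : Function.Injective μs := by
    intro i j hij
    fin_cases i <;> fin_cases j <;> simp_all [hμs] <;> tauto
  have hev : ∀ i, ∃ w, f.HasEigenvector (μs i) w := by
    intro i
    have hmem : μs i ∈ spectrum ℝ f := by rw [hs, hspec]; fin_cases i <;> simp [hμs]
    exact (Module.End.hasEigenvalue_iff_mem_spectrum.2 hmem).exists_hasEigenvector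
  choose w hw using hev
  refine ⟨w, f.eigenvectors_linearIndependent' μs hinj w hw, fun i => ⟨μs i, ?_⟩⟩
  have := (hw i).apply_eq_smul
  simpa [hf, Matrix.toLinAlgEquiv'_apply] using this

/-- Main abstract step: a `3 × 3` real matrix whose characteristic polynomial factors as
`(x - r) * ((x - μc) ^ 2 - V)` with `V > 0` has the claimed spectral properties. -/
lemma keyfact (M : Matrix (Fin 3) (Fin 3) ℝ) (r μc V : ℝ) (hV : 0 < V)
    (hdet : ∀ x : ℝ, (x • (1 : Matrix (Fin 3) (Fin 3) ℝ) - M).det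
      = (x - r) * ((x - μc) ^ 2 - V))
    (hdetC : ∀ z : ℂ, (z • (1 : Matrix (Fin 3) (Fin 3) ℂ) - M.map (fun x : ℝ => (x : ℂ))).det
      = (z - (r : ℂ)) * ((z - (μc : ℂ)) ^ 2 - (V : ℂ)))
    (lp lm : ℝ) (hlp : lp = μc + Real.sqrt V) (hlm : lm = μc - Real.sqrt V) :
    spectrum ℝ M = {r, lp, lm} ∧ lp ≠ lm ∧
    (∀ z ∈ spectrum ℂ (M.map (fun x : ℝ => (x : ℂ))), z.im = 0) ∧
    (r ≠ lp → r ≠ lm →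
      (spectrum ℝ M).ncard = 3 ∧ ∃ v : Fin 3 → (Fin 3 → ℝ), LinearIndependent ℝ v ∧
        ∀ i, ∃ μ : ℝ, M.mulVec (v i) = μ • v i) := by
  have hs : Real.sqrt V ^ 2 = V := Real.sq_sqrt hV.le
  have hspos : 0 < Real.sqrt V := Real.sqrt_pos.mpr hV
  have hlplm : lp ≠ lm := by
    rw [hlp, hlm]; intro h; nlinarith
  have hspec : spectrum ℝ M = {r, lp, lm} := by
    refine spec3 M r lp lm fun x => ?_
    rw [hdet x, hlp, hlm]
    linear_combination (x - r) * hs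
  have hsC : ((Real.sqrt V : ℝ) : ℂ) ^ 2 = (V : ℂ) := by exact_mod_cast hs
  have hspecC : spectrum ℂ (M.map (fun x : ℝ => (x : ℂ))) = {(r : ℂ), (lp : ℂ), (lm : ℂ)} := by
    refine spec3 _ _ _ _ fun z => ?_
    rw [hdetC z, hlp, hlm]
    push_cast
    linear_combination (z - (r : ℂ)) * hsC
  refine ⟨hspec, hlplm, ?_, fun h1 h2 => basis3 M r lp lm hspec h1 h2 hlplm⟩
  intro z hz
  rw [hspecC] at hz
  simp only [Set.mem_insert_iff, Set.mem_singleton_iff] at hz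
  rcases hz with hz | hz | hz <;> simp [hz]

def MsG (K : Type*) [Field K] (ψ₀ ψ₁ φ A u L a b q m₃₁ : K) : Matrix (Fin 3) (Fin 3) K :=
  !![-(A * a / ψ₀) * u, 1 / ψ₀, 0;
     q - (ψ₁ + 2 * ψ₁ * A * a / ψ₀ - A * b) * u ^ 2, 2 * (ψ₁ / ψ₀) * u, 0;
     m₃₁, (φ / ψ₀) * L, φ * u]

def MθG (K : Type*) [Field K] (ψ₀ Aθ ψ₂ ψθ₂ A ω c f q m₂₁ m₂₃ : K) : Matrix (Fin 3) (Fin 3) K :=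
  !![-(A * c / Aθ) * ω, 0, 1 / Aθ;
     m₂₁, (ψ₂ / ψ₀) * ω, m₂₃;
     q - (ψθ₂ * (Aθ + A * c) - A * Aθ * f) * ω ^ 2, 0, 2 * ψθ₂ * ω]

set_option maxHeartbeats 1000000 in
lemma detMsG {K : Type*} [Field K] [CharZero K] (ψ₀ ψ₁ φ A u L a b q m₃₁ x : K) :
    (x • (1 : Matrix (Fin 3) (Fin 3) K) - MsG K ψ₀ ψ₁ φ A u L a b q m₃₁).det
      = (x - φ * u) * ((x - ((2 * ψ₁ - A * a) / (2 * ψ₀)) * u) ^ 2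
          - (q / ψ₀ + ((1 / ψ₀ ^ 2) * (ψ₁ - A * a / 2) ^ 2 + (1 / ψ₀) * (A * b - ψ₁)) * u ^ 2)) := by
  simp [MsG, Matrix.det_fin_three, Matrix.smul_apply, Matrix.one_apply, Matrix.sub_apply]
  ring

set_option maxHeartbeats 1000000 in
lemma detMθG {K : Type*} [Field K] [CharZero K] (ψ₀ Aθ ψ₂ ψθ₂ A ω c f q m₂₁ m₂₃ x : K)
    (hAθ : Aθ ≠ 0) :
    (x • (1 : Matrix (Fin 3) (Fin 3) K) - MθG K ψ₀ Aθ ψ₂ ψθ₂ A ω c f q m₂₁ m₂₃).det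
      = (x - (ψ₂ / ψ₀) * ω) * ((x - ((2 * ψθ₂ * Aθ - A * c) / (2 * Aθ)) * ω) ^ 2
          - (q / Aθ + ((1 / Aθ ^ 2) * (ψθ₂ * Aθ - A * c / 2) ^ 2
              + (1 / Aθ) * (A * (f * Aθ + ψθ₂ * c) - ψθ₂ * Aθ)) * ω ^ 2)) := by
  have h1 : Aθ * Aθ⁻¹ = 1 := mul_inv_cancel₀ hAθ
  simp [MθG, Matrix.det_fin_three, Matrix.smul_apply, Matrix.one_apply, Matrix.sub_apply]
  linear_combination (2 * x ^ 2 * ω * ψθ₂ - 2 * x * ω ^ 2 * ψ₂ * ψ₀⁻¹ * ψθ₂) * h1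

lemma MsMap (ψ₀ ψ₁ φ A u L a b q m₃₁ : ℝ) :
    (Ms ψ₀ ψ₁ φ A u L a b q m₃₁).map (fun x : ℝ => (x : ℂ))
      = MsG ℂ ψ₀ ψ₁ φ A u L a b q m₃₁ := by
  ext i j
  fin_cases i <;> fin_cases j <;> simp [Ms, MsG]

lemma MθMap (ψ₀ Aθ ψ₂ ψθ₂ A ω c f q m₂₁ m₂₃ : ℝ) :
    (Mθ ψ₀ Aθ ψ₂ ψθ₂ A ω c f q m₂₁ m₂₃).map (fun x : ℝ => (x : ℂ))
      = MθG ℂ ψ₀ Aθ ψ₂ ψθ₂ A ω c f q m₂₁ m₂₃ := by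
  ext i j
  fin_cases i <;> fin_cases j <;> simp [Mθ, MθG]

theorem stmt3 (ρ ψ₀ A Aθ q ψ₁ φ ψ₂ ψθ₂ u ω L a b c f m₃₁ m₂₁ m₂₃ : ℝ)
    (hρ : 0 < ρ) (hψ₀ : 0 < ψ₀) (hA : 0 < A) (hAθ : 0 < Aθ) (hq : 0 < q)
    (Υ₁ Υ₂ : ℝ)
    (hΥ₁ : Υ₁ = (1 / ψ₀ ^ 2) * (ψ₁ - A * a / 2) ^ 2 + (1 / ψ₀) * (A * b - ψ₁))
    (hΥ₂ : Υ₂ = (1 / Aθ ^ 2) * (ψθ₂ * Aθ - A * c / 2) ^ 2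
        + (1 / Aθ) * (A * (f * Aθ + ψθ₂ * c) - ψθ₂ * Aθ))
    (hΥ₁nn : 0 ≤ Υ₁) (hΥ₂nn : 0 ≤ Υ₂)
    (lamPs lamMs lamPθ lamMθ : ℝ)
    (hlamPs : lamPs = ((2 * ψ₁ - A * a) / (2 * ψ₀)) * u + Real.sqrt (q / ψ₀ + Υ₁ * u ^ 2))
    (hlamMs : lamMs = ((2 * ψ₁ - A * a) / (2 * ψ₀)) * u - Real.sqrt (q / ψ₀ + Υ₁ * u ^ 2))
    (hlamPθ : lamPθ = ((2 * ψθ₂ * Aθ - A * c) / (2 * Aθ)) * ω + Real.sqrt (q / Aθ + Υ₂ * ω ^ 2))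
    (hlamMθ : lamMθ = ((2 * ψθ₂ * Aθ - A * c) / (2 * Aθ)) * ω - Real.sqrt (q / Aθ + Υ₂ * ω ^ 2)) :
    spectrum ℝ (Ms ψ₀ ψ₁ φ A u L a b q m₃₁) = {φ * u, lamPs, lamMs} ∧
    lamPs ≠ lamMs ∧
    spectrum ℝ (Mθ ψ₀ Aθ ψ₂ ψθ₂ A ω c f q m₂₁ m₂₃) = {(ψ₂ / ψ₀) * ω, lamPθ, lamMθ} ∧
    lamPθ ≠ lamMθ ∧
    (∀ z ∈ spectrum ℂ ((Ms ψ₀ ψ₁ φ A u L a b q m₃₁).map (fun x : ℝ => (x : ℂ))), z.im = 0) ∧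
    (∀ z ∈ spectrum ℂ ((Mθ ψ₀ Aθ ψ₂ ψθ₂ A ω c f q m₂₁ m₂₃).map (fun x : ℝ => (x : ℂ))),
      z.im = 0) ∧
    (φ * u ≠ lamPs → φ * u ≠ lamMs →
      (spectrum ℝ (Ms ψ₀ ψ₁ φ A u L a b q m₃₁)).ncard = 3 ∧
      ∃ v : Fin 3 → (Fin 3 → ℝ), LinearIndependent ℝ v ∧
        ∀ i, ∃ μ : ℝ, (Ms ψ₀ ψ₁ φ A u L a b q m₃₁).mulVec (v i) = μ • v i) ∧
    ((ψ₂ / ψ₀) * ω ≠ lamPθ → (ψ₂ / ψ₀) * ω ≠ lamMθ →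
      (spectrum ℝ (Mθ ψ₀ Aθ ψ₂ ψθ₂ A ω c f q m₂₁ m₂₃)).ncard = 3 ∧
      ∃ v : Fin 3 → (Fin 3 → ℝ), LinearIndependent ℝ v ∧
        ∀ i, ∃ μ : ℝ, (Mθ ψ₀ Aθ ψ₂ ψθ₂ A ω c f q m₂₁ m₂₃).mulVec (v i) = μ • v i) := by
  have hV₁ : 0 < q / ψ₀ + Υ₁ * u ^ 2 :=
    add_pos_of_pos_of_nonneg (div_pos hq hψ₀) (mul_nonneg hΥ₁nn (sq_nonneg u))
  have hV₂ : 0 < q / Aθ + Υ₂ * ω ^ 2 :=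
    add_pos_of_pos_of_nonneg (div_pos hq hAθ) (mul_nonneg hΥ₂nn (sq_nonneg ω))
  obtain ⟨hS1, hS2, hS3, hS4⟩ :=
    keyfact (Ms ψ₀ ψ₁ φ A u L a b q m₃₁) (φ * u) (((2 * ψ₁ - A * a) / (2 * ψ₀)) * u)
      (q / ψ₀ + Υ₁ * u ^ 2) hV₁
      (fun x => by
        rw [show Ms ψ₀ ψ₁ φ A u L a b q m₃₁ = MsG ℝ ψ₀ ψ₁ φ A u L a b q m₃₁ from rfl,
          detMsG, hΥ₁])
      (fun z => by
        rw [MsMap, detMsG (K := ℂ)]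
        push_cast [hΥ₁]
        ring)
      lamPs lamMs hlamPs hlamMs
  obtain ⟨hT1, hT2, hT3, hT4⟩ :=
    keyfact (Mθ ψ₀ Aθ ψ₂ ψθ₂ A ω c f q m₂₁ m₂₃) ((ψ₂ / ψ₀) * ω)
      (((2 * ψθ₂ * Aθ - A * c) / (2 * Aθ)) * ω) (q / Aθ + Υ₂ * ω ^ 2) hV₂
      (fun x => by
        rw [show Mθ ψ₀ Aθ ψ₂ ψθ₂ A ω c f q m₂₁ m₂₃ = MθG ℝ ψ₀ Aθ ψ₂ ψθ₂ A ω c f q m₂₁ m₂₃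
            from rfl,
          detMθG _ _ _ _ _ _ _ _ _ _ _ _ hAθ.ne', hΥ₂])
      (fun z => by
        rw [MθMap, detMθG _ _ _ _ _ _ _ _ _ _ _ _ (by exact_mod_cast hAθ.ne')]
        push_cast [hΥ₂]
        ring)
      lamPθ lamMθ hlamPθ hlamMθ
  exact ⟨hS1, hS2, hT1, hT2, hS3, hT3, hS4, hT4⟩
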